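/- If c is a greedy word of length n ending in the block 10^h for some h ≥ 0, then the class of c·00 (c followed by two zeros) has cardinality at least #[c] + 1; concretely, appending 00 and applying the substitution 100 → 011 repeatedly inside the tail produces a word in [c·00] not of the form d·00 with d ∈ [c]. -/

import Mathlib

noncomputable def phi : ℝ := (1 + Real.sqrt 5) / 2

/-- Value of a binary word in base φ. -/
noncomputable def val {n : ℕ} (c : Fin n → Fin 2) : ℝ :=
  ∑ i : Fin n, (c i : ℕ) / phi ^ ((i : ℕ) + 1)

/-- A binary word avoids the factor `011`. -/
def Greedy {n : ℕ} (c : Fin n → Fin 2) : Prop :=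
  ∀ i j k : Fin n, (j : ℕ) = (i : ℕ) + 1 → (k : ℕ) = (i : ℕ) + 2 →
    ¬ (c i = 0 ∧ c j = 1 ∧ c k = 1)

lemma phi_pos : 0 < phi := by unfold phi; nlinarith [Real.sqrt_nonneg 5]
lemma phi_ne : phi ≠ 0 := ne_of_gt phi_pos
lemma phi_sq : phi ^ 2 = phi + 1 := by
  unfold phi
  have h5 : Real.sqrt 5 ^ 2 = 5 := Real.sq_sqrt (by norm_num)
  nlinarith [h5]
lemma inv_base : phi⁻¹ + (phi ^ 2)⁻¹ = 1 := by
  have h2 : (phi:ℝ)^2 ≠ 0 := pow_ne_zero _ phi_ne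
  have h1 : phi⁻¹ = phi / phi ^ 2 := by
    rw [pow_two, mul_comm]
    rw [div_mul_eq_div_div, div_self phi_ne, one_div]
  rw [h1, inv_eq_one_div, ← add_div, ← phi_sq, div_self h2]
lemma inv_id (j : ℕ) : (phi ^ (j+2))⁻¹ + (phi ^ (j+3))⁻¹ = (phi ^ (j+1))⁻¹ := by
  have h1 : phi ^ (j+3) = phi ^ (j+1) * phi ^ 2 := by ring
  have h2 : phi ^ (j+2) = phi ^ (j+1) * phi := by ring
  rw [h1, h2, mul_inv, mul_inv, ← mul_add, inv_base, mul_one]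
lemma key_sum (m : ℕ) : ∀ t : ℕ,
    (∑ k ∈ Finset.range t, (phi ^ (m + 2*k + 2))⁻¹) + (phi ^ (m + 2*t + 1))⁻¹ = (phi ^ (m+1))⁻¹ := by
  intro t
  induction t with
  | zero => simp
  | succ t ih =>
    rw [Finset.sum_range_succ]
    have e1 : m + 2*(t+1) + 1 = (m + 2*t) + 3 := by ring
    have e2 : m + 2*t + 2 = (m + 2*t) + 2 := by ring
    rw [e1, e2, add_assoc, inv_id (m + 2*t)]
    exact ih
lemma val_snoc {n : ℕ} (d : Fin n → Fin 2) (x : Fin 2) :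
    val (Fin.snoc d x) = val d + (x : ℕ) / phi ^ (n + 1) := by
  unfold val
  rw [Fin.sum_univ_castSucc]
  simp [Fin.snoc_castSucc, Fin.snoc_last]
lemma snoc_tail {n : ℕ} (d : Fin n → Fin 2) (i : Fin (n+2)) (hi : n ≤ (i:ℕ)) :
    (Fin.snoc (Fin.snoc d (0:Fin 2)) (0:Fin 2) : Fin (n+2) → Fin 2) i = 0 := by
  rcases lt_or_ge (i:ℕ) (n+1) with hlt | hge
  · have : i = Fin.castSucc ⟨n, by omega⟩ := by
      have : (i:ℕ) = n := by omega
      apply Fin.ext; simpa using this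
    rw [this, Fin.snoc_castSucc]
    have : (⟨n, by omega⟩ : Fin (n+1)) = Fin.last n := rfl
    rw [this, Fin.snoc_last]
  · have : i = Fin.last (n+1) := by
      apply Fin.ext; simp; omega
    rw [this, Fin.snoc_last]
lemma val_snoc00 {n : ℕ} (d : Fin n → Fin 2) :
    val (Fin.snoc (Fin.snoc d (0:Fin 2)) (0:Fin 2) : Fin (n+2) → Fin 2) = val d := by
  rw [val_snoc, val_snoc]; simp
lemma snoc00_inj {n : ℕ} : Function.Injective
    (fun d : Fin n → Fin 2 => (Fin.snoc (Fin.snoc d (0:Fin 2)) (0:Fin 2) : Fin (n+2) → Fin 2)) := by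
  intro a b hab
  funext i
  have := congrFun hab (Fin.castSucc (Fin.castSucc i))
  simpa [Fin.snoc_castSucc] using this

theorem class_append_two_zeros {n h : ℕ} (c : Fin n → Fin 2)
    (hg : Greedy c) (hh : h < n)
    (hone : ∀ i : Fin n, (i : ℕ) = n - 1 - h → c i = 1)
    (hzeros : ∀ j : Fin n, n - 1 - h < (j : ℕ) → c j = 0) :
    Nat.card {d : Fin (n + 2) → Fin 2 //
        val d = val (Fin.snoc (Fin.snoc c (0 : Fin 2)) (0 : Fin 2))} ≥
      Nat.card {d : Fin n → Fin 2 // val d = val c} + 1 := by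
  classical
  set m : ℕ := n - 1 - h with hm
  set t : ℕ := h / 2 + 1 with ht
  have hn1 : 1 ≤ n := by omega
  have hmn : m < n := by omega
  have hmt : m + 2*t = n + 1 - h % 2 := by omega
  have hmtn : n ≤ m + 2*t := by omega
  have hmtn2 : m + 2*t ≤ n + 1 := by omega
  -- auxiliary definitions
  set cN : ℕ → Fin 2 := fun i => if hi : i < n then c ⟨i, hi⟩ else 0 with hcN
  set S : Finset ℕ := insert (m + 2*t) ((Finset.range t).image (fun k => m + 2*k + 1)) with hS
  set eN : ℕ → Fin 2 := fun i => if i < m then cN i else if i ∈ S then 1 else 0 with heN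
  set e : Fin (n+2) → Fin 2 := fun i => eN i with he
  have hSub : ∀ x ∈ S, m ≤ x ∧ x < n + 2 := by
    intro x hx
    rw [hS] at hx
    rcases Finset.mem_insert.mp hx with hx | hx
    · omega
    · obtain ⟨k, hk, rfl⟩ := Finset.mem_image.mp hx
      have : k < t := Finset.mem_range.mp hk
      omega
  -- val c = prefix + phi^-(m+1)
  have hvc : val c = (∑ i ∈ Finset.range m, ((cN i : ℕ) : ℝ) / phi ^ (i+1)) + (phi ^ (m+1))⁻¹ := by
    have h1 : val c = ∑ i ∈ Finset.range n, ((cN i : ℕ) : ℝ) / phi ^ (i+1) := by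
      rw [val, ← Fin.sum_univ_eq_sum_range (fun i => ((cN i : ℕ) : ℝ) / phi ^ (i+1)) n]
      apply Finset.sum_congr rfl
      intro i _
      rw [hcN]
      simp [i.isLt]
    rw [h1]
    rw [Finset.range_eq_Ico, ← Finset.sum_Ico_consecutive _ (Nat.zero_le m) (le_of_lt hmn)]
    rw [← Finset.range_eq_Ico]
    congr 1
    rw [Finset.sum_eq_single_of_mem m (Finset.mem_Ico.mpr ⟨le_refl m, by omega⟩)]
    · rw [hcN]
      simp only [hmn, dif_pos]
      rw [hone ⟨m, hmn⟩ rfl]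
      norm_num
    · intro b hb hbm
      have hb' := Finset.mem_Ico.mp hb
      rw [hcN]
      by_cases hbn : b < n
      · simp only [hbn, dif_pos]
        rw [hzeros ⟨b, hbn⟩ (by simp; omega)]
        norm_num
      · omega
  -- val e = prefix + phi^-(m+1)
  have hve : val e = (∑ i ∈ Finset.range m, ((cN i : ℕ) : ℝ) / phi ^ (i+1)) + (phi ^ (m+1))⁻¹ := by
    have h1 : val e = ∑ i ∈ Finset.range (n+2), ((eN i : ℕ) : ℝ) / phi ^ (i+1) := by
      rw [val, ← Fin.sum_univ_eq_sum_range (fun i => ((eN i : ℕ) : ℝ) / phi ^ (i+1)) (n+2)]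
    rw [h1]
    rw [Finset.range_eq_Ico, ← Finset.sum_Ico_consecutive _ (Nat.zero_le m) (by omega : m ≤ n+2)]
    rw [← Finset.range_eq_Ico]
    congr 1
    · apply Finset.sum_congr rfl
      intro i hi
      have : i < m := Finset.mem_range.mp hi
      rw [heN]; simp [this]
    · have h2 : ∀ i ∈ Finset.Ico m (n+2),
          ((eN i : ℕ) : ℝ) / phi ^ (i+1) = if i ∈ S then (phi ^ (i+1))⁻¹ else 0 := by
        intro i hi
        have hi' := Finset.mem_Ico.mp hi
        rw [heN]
        simp only [not_lt.mpr hi'.1, if_neg (not_lt.mpr hi'.1)]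
        by_cases hiS : i ∈ S
        · simp [hiS, one_div]
        · simp [hiS]
      rw [Finset.sum_congr rfl h2]
      rw [Finset.sum_ite_mem]
      have hinter : Finset.Ico m (n+2) ∩ S = S := by
        apply Finset.inter_eq_right.mpr
        intro x hx
        exact Finset.mem_Ico.mpr ⟨(hSub x hx).1, (hSub x hx).2⟩
      rw [hinter, hS]
      rw [Finset.sum_insert (by
        intro hmem
        obtain ⟨k, hk, hkk⟩ := Finset.mem_image.mp hmem
        omega)]
      rw [Finset.sum_image (by intro x _ y _ hxy; simp only at hxy; omega)]
      rw [← key_sum m t]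
      have : ∀ k, (phi ^ (m + 2*k + 1 + 1))⁻¹ = (phi ^ (m + 2*k + 2))⁻¹ := by
        intro k; congr 1
      rw [Finset.sum_congr rfl (fun k _ => this k)]
      ring
  have hvec : val e = val c := by rw [hve, hvc]
  -- e is not of snoc00 form at position m + 2t
  obtain ⟨idx, hidx⟩ : ∃ idx : Fin (n+2), (idx : ℕ) = m + 2*t := ⟨⟨m + 2*t, by omega⟩, rfl⟩
  have heone : e idx = 1 := by
    rw [he, heN]
    simp only [hidx]
    rw [if_neg (by omega)]
    rw [if_pos (by rw [hS]; exact Finset.mem_insert_self _ _)]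
  have hne : ∀ d : Fin n → Fin 2,
      (Fin.snoc (Fin.snoc d (0:Fin 2)) (0:Fin 2) : Fin (n+2) → Fin 2) ≠ e := by
    intro d heq
    have h1 := congrFun heq idx
    rw [heone, snoc_tail d idx (by omega)] at h1
    exact absurd h1 (by decide)
  -- the injection
  set G : {d : Fin n → Fin 2 // val d = val c} ⊕ Unit →
      {d : Fin (n + 2) → Fin 2 //
        val d = val (Fin.snoc (Fin.snoc c (0 : Fin 2)) (0 : Fin 2))} :=
    Sum.elim
      (fun d => ⟨Fin.snoc (Fin.snoc d.1 (0:Fin 2)) (0:Fin 2), by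
        rw [val_snoc00, val_snoc00]; exact d.2⟩)
      (fun _ => ⟨e, by rw [val_snoc00]; rw [hvec]⟩) with hG
  have hGinj : Function.Injective G := by
    intro a b hab
    rcases a with a | a <;> rcases b with b | b
    · have : (Fin.snoc (Fin.snoc a.1 (0:Fin 2)) (0:Fin 2) : Fin (n+2) → Fin 2) =
          Fin.snoc (Fin.snoc b.1 (0:Fin 2)) (0:Fin 2) := congrArg Subtype.val hab
      have := snoc00_inj this
      exact congrArg Sum.inl (Subtype.ext this)
    · exact absurd (congrArg Subtype.val hab) (hne a.1)
    · exact absurd (congrArg Subtype.val hab).symm (hne b.1)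
    · exact congrArg Sum.inr (Subsingleton.elim a b)
  have hcard := Nat.card_le_card_of_injective G hGinj
  rw [Nat.card_sum] at hcard
  simpa using hcard
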